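/- Let b be a prime, m ≥ 1, and let P_n = (V_0,…,V_{b^m−1}) be the digital net in base b with generating matrices C_1,…,C_s ∈ F_b^{m×m}. Then for every k ∈ ℕ^s with k_j ≤ m for all j and every index l ∈ {0,…,b^m−1}, m_b(k;P_n,V_l) = b^{m−r(k)} − 1, where r(k) is the rank over F_b of the matrix formed by stacking the first k_j rows of C_j for j = 1,…,s. -/

import Mathlib

open MeasureTheory
open scoped Classical

noncomputable def gammaB (b : ℕ) (x y : ℝ) : ℕ∞ :=
  if x = y then ⊤
  else (↑(sInf {i : ℕ | ⌊(b : ℝ) ^ i * x⌋ = ⌊(b : ℝ) ^ i * y⌋ ∧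
      ⌊(b : ℝ) ^ (i + 1) * x⌋ ≠ ⌊(b : ℝ) ^ (i + 1) * y⌋}) : ℕ∞)

noncomputable def mB {n s : ℕ} (b : ℕ) (P : Fin n → Fin s → ℝ) (k : Fin s → ℕ) (l : Fin n) : ℕ :=
  (Finset.univ.filter fun j : Fin n =>
    j ≠ l ∧ ∀ r : Fin s, (k r : ℕ∞) ≤ gammaB b (P l r) (P j r)).card

noncomputable def nB {n s : ℕ} (b : ℕ) (P : Fin n → Fin s → ℝ) (i : Fin s → ℕ) (l : Fin n) : ℕ :=
  (Finset.univ.filter fun j : Fin n =>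
    j ≠ l ∧ ∀ r : Fin s, gammaB b (P l r) (P j r) = (i r : ℕ∞)).card

noncomputable def MB {n s : ℕ} (b : ℕ) (P : Fin n → Fin s → ℝ) (k : Fin s → ℕ) : ℕ :=
  ∑ l : Fin n, mB b P k l

noncomputable def NB {n s : ℕ} (b : ℕ) (P : Fin n → Fin s → ℝ) (i : Fin s → ℕ) : ℕ :=
  ∑ l : Fin n, nB b P i l

noncomputable def CB {n s : ℕ} (b : ℕ) (P : Fin n → Fin s → ℝ) (k : Fin s → ℕ) : ℝ :=
  (b : ℝ) ^ (∑ j, k j) * (MB b P k : ℝ) / ((n : ℝ) * ((n : ℝ) - 1))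

noncomputable def digitalNet (b m s : ℕ) (C : Fin s → Matrix (Fin m) (Fin m) (ZMod b)) :
    Fin (b ^ m) → Fin s → ℝ :=
  fun i ℓ => ∑ r : Fin m,
    ((((C ℓ).mulVec fun p : Fin m => ((((i : ℕ) / b ^ (p : ℕ)) % b : ℕ) : ZMod b)) r).val : ℝ) /
      (b : ℝ) ^ ((r : ℕ) + 1)

noncomputable def stackRank (b m s : ℕ) (C : Fin s → Matrix (Fin m) (Fin m) (ZMod b))
    (k : Fin s → ℕ) (hk : ∀ j, k j ≤ m) : ℕ :=
  (Matrix.of fun (x : (j : Fin s) × Fin (k j)) (p : Fin m) =>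
    C x.1 ⟨(x.2 : ℕ), lt_of_lt_of_le x.2.2 (hk x.1)⟩ p).rank


lemma geom_tail_lt_one (b : ℕ) (hb : 2 ≤ b) (n : ℕ) (c : ℕ → ℕ) (hc : ∀ j, c j < b) :
    ∑ j ∈ Finset.range n, (c j : ℝ) / (b:ℝ)^(j+1) < 1 := by
  have hb0 : (0:ℝ) < b := by positivity
  have hbne : (b:ℝ) ≠ 0 := ne_of_gt hb0
  have h1 : ∀ j, (c j : ℝ) / (b:ℝ)^(j+1) ≤ ((1:ℝ)/b)^j - (1/b)^(j+1) := by
    intro j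
    have hcj : (c j : ℝ) ≤ (b:ℝ) - 1 := by
      have : (c j : ℝ) + 1 ≤ (b:ℝ) := by exact_mod_cast Nat.succ_le_of_lt (hc j)
      linarith
    have heq : ((1:ℝ)/b)^j - (1/b)^(j+1) = ((b:ℝ) - 1) / (b:ℝ)^(j+1) := by
      rw [div_pow, div_pow, one_pow, one_pow]
      field_simp
      ring
    rw [heq]
    apply div_le_div_of_nonneg_right hcj (by positivity) |>.trans_eq rfl
  calc ∑ j ∈ Finset.range n, (c j : ℝ) / (b:ℝ)^(j+1)
      ≤ ∑ j ∈ Finset.range n, (((1:ℝ)/b)^j - (1/b)^(j+1)) := Finset.sum_le_sum fun j _ => h1 j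
    _ = 1 - (1/b)^n := by rw [Finset.sum_range_sub']; simp
    _ < 1 := by
        have : (0:ℝ) < (1/b)^n := by positivity
        linarith

lemma floor_digit_sum (b : ℕ) (hb : 2 ≤ b) (M k : ℕ) (hkM : k ≤ M)
    (a : ℕ → ℕ) (ha : ∀ r, a r < b) :
    ⌊(b:ℝ)^k * ∑ r ∈ Finset.range M, (a r : ℝ) / (b:ℝ)^(r+1)⌋
      = ∑ r ∈ Finset.range k, (a r : ℤ) * (b:ℤ)^(k-1-r) := by
  have hb0 : (0:ℝ) < b := by positivity
  have hbne : (b:ℝ) ≠ 0 := ne_of_gt hb0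
  set N : ℤ := ∑ r ∈ Finset.range k, (a r : ℤ) * (b:ℤ)^(k-1-r) with hN
  have hsplit : (b:ℝ)^k * ∑ r ∈ Finset.range M, (a r : ℝ) / (b:ℝ)^(r+1)
      = (N:ℝ) + ∑ j ∈ Finset.range (M-k), (a (k+j) : ℝ) / (b:ℝ)^(j+1) := by
    rw [Finset.mul_sum]
    rw [Finset.range_eq_Ico, ← Finset.sum_Ico_consecutive _ (Nat.zero_le k) hkM]
    congr 1
    · rw [hN]
      push_cast
      rw [← Finset.range_eq_Ico]
      apply Finset.sum_congr rfl
      intro r hr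
      have hr' : r < k := Finset.mem_range.mp hr
      have hexp : k = (k-1-r) + (r+1) := by omega
      rw [div_eq_mul_inv]
      calc (b:ℝ)^k * ((a r : ℝ) * ((b:ℝ)^(r+1))⁻¹)
          = (a r : ℝ) * ((b:ℝ)^k * ((b:ℝ)^(r+1))⁻¹) := by ring
        _ = (a r : ℝ) * (b:ℝ)^(k-1-r) := by
            rw [hexp, pow_add]
            field_simp
            rw [show k - 1 - r + (r + 1) - 1 - r = k - 1 - r by omega]
    · rw [Finset.sum_Ico_eq_sum_range]
      apply Finset.sum_congr rfl
      intro j _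
      have : (k + j + 1) = (j+1) + k := by omega
      rw [div_eq_mul_inv, div_eq_mul_inv, this, pow_add]
      field_simp
  rw [hsplit]
  rw [Int.floor_eq_iff]
  constructor
  · have : (0:ℝ) ≤ ∑ j ∈ Finset.range (M-k), (a (k+j) : ℝ) / (b:ℝ)^(j+1) := by positivity
    linarith
  · have := geom_tail_lt_one b hb (M-k) (fun j => a (k+j)) (fun j => ha _)
    push_cast
    linarith


lemma digit_sum_inj (b : ℕ) (hb : 2 ≤ b) (k : ℕ) (a a' : ℕ → ℕ)
    (ha : ∀ r, a r < b) (ha' : ∀ r, a' r < b) :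
    (∑ r ∈ Finset.range k, (a r : ℤ) * (b:ℤ)^(k-1-r)
      = ∑ r ∈ Finset.range k, (a' r : ℤ) * (b:ℤ)^(k-1-r)) ↔ ∀ r < k, a r = a' r := by
  induction k with
  | zero => simp
  | succ k ih =>
    have hsplit : ∀ (c : ℕ → ℕ), ∑ r ∈ Finset.range (k+1), (c r : ℤ) * (b:ℤ)^(k+1-1-r)
        = b * (∑ r ∈ Finset.range k, (c r : ℤ) * (b:ℤ)^(k-1-r)) + c k := by
      intro c
      rw [Finset.sum_range_succ]
      have h0 : (k+1-1-k) = 0 := by omega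
      rw [h0, pow_zero, mul_one, Finset.mul_sum]
      congr 1
      apply Finset.sum_congr rfl
      intro r hr
      have hr' : r < k := Finset.mem_range.mp hr
      have h1 : (k+1-1-r) = (k-1-r)+1 := by omega
      rw [h1, pow_succ]
      ring
    rw [hsplit, hsplit]
    set F := ∑ r ∈ Finset.range k, (a r : ℤ) * (b:ℤ)^(k-1-r) with hF
    set F' := ∑ r ∈ Finset.range k, (a' r : ℤ) * (b:ℤ)^(k-1-r) with hF'
    constructor
    · intro h
      have hdvd : (b:ℤ) ∣ ((a k : ℤ) - (a' k : ℤ)) := ⟨F' - F, by linarith [h]⟩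
      have habs : |(a k : ℤ) - (a' k : ℤ)| < b := by
        have h1 : (a k : ℤ) < b := by exact_mod_cast ha k
        have h2 : (a' k : ℤ) < b := by exact_mod_cast ha' k
        have h3 : (0:ℤ) ≤ a k := Int.natCast_nonneg _
        have h4 : (0:ℤ) ≤ a' k := Int.natCast_nonneg _
        rw [abs_lt]; constructor <;> linarith
      have hak : (a k : ℤ) = (a' k : ℤ) := by
        have := Int.eq_zero_of_abs_lt_dvd hdvd habs
        linarith
      have hFF : F = F' := by
        have hb0 : (b:ℤ) ≠ 0 := by positivity
        have : (b:ℤ) * F = (b:ℤ) * F' := by linarith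
        exact mul_left_cancel₀ hb0 this
      intro r hr
      rcases Nat.lt_succ_iff_lt_or_eq.mp hr with h' | h'
      · exact ih.mp hFF r h'
      · subst h'; exact_mod_cast hak
    · intro h
      have h1 : F = F' := ih.mpr (fun r hr => h r (Nat.lt_succ_of_lt hr))
      have h2 : a k = a' k := h k (Nat.lt_succ_self k)
      rw [h1, h2]

lemma gamma_le_iff (b : ℕ) (hb : 2 ≤ b) (m : ℕ) (a a' : ℕ → ℕ)
    (ha : ∀ r, a r < b) (ha' : ∀ r, a' r < b)
    (hz : ∀ r, m ≤ r → a r = 0) (hz' : ∀ r, m ≤ r → a' r = 0) (k : ℕ) :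
    ((k : ℕ∞) ≤ gammaB b (∑ r ∈ Finset.range m, (a r : ℝ)/(b:ℝ)^(r+1))
        (∑ r ∈ Finset.range m, (a' r : ℝ)/(b:ℝ)^(r+1)))
      ↔ ∀ r < k, a r = a' r := by
  set x := ∑ r ∈ Finset.range m, (a r : ℝ)/(b:ℝ)^(r+1) with hxdef
  set y := ∑ r ∈ Finset.range m, (a' r : ℝ)/(b:ℝ)^(r+1) with hydef
  have hfloor : ∀ (c : ℕ → ℕ), (∀ r, c r < b) → (∀ r, m ≤ r → c r = 0) → ∀ i : ℕ,
      ⌊(b:ℝ)^i * ∑ r ∈ Finset.range m, (c r : ℝ)/(b:ℝ)^(r+1)⌋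
        = ∑ r ∈ Finset.range i, (c r : ℤ) * (b:ℤ)^(i-1-r) := by
    intro c hc hcz i
    have hsum : ∑ r ∈ Finset.range m, (c r : ℝ)/(b:ℝ)^(r+1)
        = ∑ r ∈ Finset.range (max m i), (c r : ℝ)/(b:ℝ)^(r+1) := by
      apply Finset.sum_subset (Finset.range_subset_range.mpr (le_max_left _ _))
      intro r _ hr
      have : m ≤ r := by
        by_contra h
        exact hr (Finset.mem_range.mpr (lt_of_not_ge h))
      rw [hcz r this]; simp
    rw [hsum]
    exact floor_digit_sum b hb (max m i) i (le_max_right _ _) c hc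
  have hE : ∀ i : ℕ, (⌊(b:ℝ)^i * x⌋ = ⌊(b:ℝ)^i * y⌋) ↔ ∀ r < i, a r = a' r := by
    intro i
    rw [hfloor a ha hz i, hfloor a' ha' hz' i]
    exact digit_sum_inj b hb i a a' ha ha'
  have hxy : x = y ↔ ∀ r, a r = a' r := by
    constructor
    · intro h r
      by_cases h' : r < m
      · exact (hE (r+1)).mp (by rw [h]) r (Nat.lt_succ_self r)
      · rw [hz r (le_of_not_gt h'), hz' r (le_of_not_gt h')]
    · intro h
      apply Finset.sum_congr rfl
      intro r _
      rw [h r]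
  by_cases hxe : x = y
  · rw [gammaB, if_pos hxe]
    simp only [le_top, true_iff]
    exact fun r _ => hxy.mp hxe r
  · rw [gammaB, if_neg hxe]
    have hne : ∃ r, a r ≠ a' r := by
      by_contra h
      push_neg at h
      exact hxe (hxy.mpr h)
    set N := Nat.find hne with hNdef
    have hNd : a N ≠ a' N := Nat.find_spec hne
    have hNmin : ∀ r < N, a r = a' r := fun r hr => not_not.mp (Nat.find_min hne hr)
    have hS : {i : ℕ | ⌊(b : ℝ) ^ i * x⌋ = ⌊(b : ℝ) ^ i * y⌋ ∧
        ⌊(b : ℝ) ^ (i + 1) * x⌋ ≠ ⌊(b : ℝ) ^ (i + 1) * y⌋} = {N} := by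
      ext i
      simp only [Set.mem_setOf_eq, Set.mem_singleton_iff]
      rw [hE i, ne_eq, hE (i+1)]
      constructor
      · rintro ⟨h1, h2⟩
        push_neg at h2
        obtain ⟨r, hr, hrd⟩ := h2
        have h3 : N ≤ r := Nat.find_min' hne hrd
        have h4 : i ≤ N := by
          by_contra h
          push_neg at h
          exact hNd (h1 N h)
        omega
      · intro h
        subst h
        exact ⟨hNmin, fun hall => hNd (hall N (Nat.lt_succ_self N))⟩
    rw [hS, csInf_singleton, Nat.cast_le]
    constructor
    · intro h r hr
      exact hNmin r (lt_of_lt_of_le hr h)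
    · intro h
      by_contra hh
      push_neg at hh
      exact hNd (h N hh)

lemma digits_recover (b : ℕ) (hb : 2 ≤ b) (m : ℕ) :
    ∀ i : ℕ, i < b ^ m → ∑ p ∈ Finset.range m, (i / b ^ p % b) * b ^ p = i := by
  induction m with
  | zero =>
    intro i hi
    simp only [pow_zero] at hi
    simpa using (Nat.lt_one_iff.mp hi).symm
  | succ m ih =>
    intro i hi
    rw [Finset.sum_range_succ']
    have h1 : ∀ p, i / b ^ (p+1) % b * b ^ (p+1) = b * (i / b / b ^ p % b * b ^ p) := by
      intro p
      rw [Nat.div_div_eq_div_mul, ← pow_succ']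
      rw [pow_succ]
      ring
    simp only [pow_zero, Nat.div_one, mul_one]
    rw [Finset.sum_congr rfl (fun p _ => h1 p), ← Finset.mul_sum,
      ih (i/b) (by
        rw [Nat.div_lt_iff_lt_mul (by omega)]
        rw [← pow_succ]
        exact hi)]
    exact Nat.div_add_mod i b

lemma card_ker (b : ℕ) [Fact b.Prime] {ι : Type} [Fintype ι] {m : ℕ}
    (D : Matrix ι (Fin m) (ZMod b)) :
    (Finset.univ.filter (fun v : Fin m → ZMod b => D.mulVec v = 0)).card
      = b ^ (m - D.rank) ∧ D.rank ≤ m := by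
  have hrank : D.rank + Module.finrank (ZMod b) (LinearMap.ker D.mulVecLin) = m := by
    rw [Matrix.rank, LinearMap.finrank_range_add_finrank_ker]
    simp [Module.finrank_pi]
  have hcard := Module.card_eq_pow_finrank (K := ZMod b) (V := LinearMap.ker D.mulVecLin)
  rw [ZMod.card] at hcard
  have hsub : Fintype.card {v : Fin m → ZMod b // D.mulVec v = 0}
      = Fintype.card (LinearMap.ker D.mulVecLin) := by
    apply Fintype.card_congr
    apply Equiv.subtypeEquivRight
    intro v
    rw [LinearMap.mem_ker, Matrix.mulVecLin_apply]
  constructor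
  · rw [← Fintype.card_subtype, hsub, hcard]
    congr 1
    omega
  · omega

/-- digit map -/
noncomputable def phiD (b m : ℕ) : Fin (b ^ m) → (Fin m → ZMod b) :=
  fun i p => ((((i : ℕ) / b ^ (p : ℕ)) % b : ℕ) : ZMod b)

/-- digits of net points extended to ℕ -/
noncomputable def digD (b m s : ℕ) (C : Fin s → Matrix (Fin m) (Fin m) (ZMod b))
    (j : Fin (b ^ m)) (r : Fin s) (t : ℕ) : ℕ :=
  if h : t < m then ((C r).mulVec (phiD b m j) ⟨t, h⟩).val else 0

lemma digitalNet_eq (b m s : ℕ) (C : Fin s → Matrix (Fin m) (Fin m) (ZMod b))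
    (j : Fin (b ^ m)) (r : Fin s) :
    digitalNet b m s C j r
      = ∑ t ∈ Finset.range m, (digD b m s C j r t : ℝ) / (b : ℝ) ^ (t + 1) := by
  rw [digitalNet, ← Fin.sum_univ_eq_sum_range
    (fun t => (digD b m s C j r t : ℝ) / (b : ℝ) ^ (t + 1)) m]
  apply Finset.sum_congr rfl
  intro t _
  simp only [digD, phiD, dif_pos t.isLt]
  rfl

theorem stmt4 (b m s : ℕ) [Fact (Nat.Prime b)] (hm : 1 ≤ m)
    (C : Fin s → Matrix (Fin m) (Fin m) (ZMod b))
    (k : Fin s → ℕ) (hk : ∀ j, k j ≤ m) (l : Fin (b ^ m)) :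
    mB b (digitalNet b m s C) k l = b ^ (m - stackRank b m s C k hk) - 1 := by
  have hbp : Nat.Prime b := Fact.out
  have hb : 2 ≤ b := hbp.two_le
  haveI : NeZero b := ⟨by omega⟩
  set D : Matrix ((j : Fin s) × Fin (k j)) (Fin m) (ZMod b) :=
    Matrix.of fun (x : (j : Fin s) × Fin (k j)) (p : Fin m) =>
      C x.1 ⟨(x.2 : ℕ), lt_of_lt_of_le x.2.2 (hk x.1)⟩ p with hD
  -- φ is injective / bijective
  have hφinj : Function.Injective (phiD b m) := by
    intro i j h
    apply Fin.ext
    have hd : ∀ p, p < m → (i : ℕ) / b ^ p % b = (j : ℕ) / b ^ p % b := by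
      intro p hp
      have h2 := congrFun h ⟨p, hp⟩
      have hi' : (i : ℕ) / b ^ p % b < b := Nat.mod_lt _ (by omega)
      have hj' : (j : ℕ) / b ^ p % b < b := Nat.mod_lt _ (by omega)
      calc (i:ℕ)/b^p%b = ((((i:ℕ)/b^p%b : ℕ) : ZMod b)).val := (ZMod.val_cast_of_lt hi').symm
        _ = ((((j:ℕ)/b^p%b : ℕ) : ZMod b)).val := by
            simp only [phiD] at h2; rw [h2]
        _ = (j:ℕ)/b^p%b := ZMod.val_cast_of_lt hj'
    calc (i:ℕ) = ∑ p ∈ Finset.range m, ((i:ℕ)/b^p%b)*b^p := (digits_recover b hb m i i.isLt).symm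
      _ = ∑ p ∈ Finset.range m, ((j:ℕ)/b^p%b)*b^p :=
          Finset.sum_congr rfl fun p hp => by rw [hd p (Finset.mem_range.mp hp)]
      _ = (j:ℕ) := digits_recover b hb m j j.isLt
  have hφbij : Function.Bijective (phiD b m) := by
    refine (Fintype.bijective_iff_injective_and_card _).mpr ⟨hφinj, ?_⟩
    simp [ZMod.card]
  -- digit bounds
  have hdig_lt : ∀ (j : Fin (b^m)) (r : Fin s) (t : ℕ), digD b m s C j r t < b := by
    intro j r t
    rw [digD]
    split
    · exact ZMod.val_lt _
    · omega
  have hdig_zero : ∀ (j : Fin (b^m)) (r : Fin s) (t : ℕ), m ≤ t → digD b m s C j r t = 0 := by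
    intro j r t ht
    rw [digD, dif_neg (by omega)]
  -- gamma condition per coordinate
  have hgamma : ∀ (j : Fin (b^m)) (r : Fin s),
      ((k r : ℕ∞) ≤ gammaB b (digitalNet b m s C l r) (digitalNet b m s C j r)
        ↔ ∀ t < k r, digD b m s C l r t = digD b m s C j r t) := by
    intro j r
    rw [digitalNet_eq, digitalNet_eq]
    exact gamma_le_iff b hb m _ _ (hdig_lt l r) (hdig_lt j r)
      (hdig_zero l r) (hdig_zero j r) (k r)
  -- full condition
  have hcond : ∀ j : Fin (b^m),
      ((∀ r, (k r : ℕ∞) ≤ gammaB b (digitalNet b m s C l r) (digitalNet b m s C j r))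
        ↔ D.mulVec (phiD b m j - phiD b m l) = 0) := by
    intro j
    constructor
    · intro h
      funext x
      obtain ⟨r, t⟩ := x
      have h2 := (hgamma j r).mp (h r) t.1 t.2
      have htm : (t : ℕ) < m := lt_of_lt_of_le t.2 (hk r)
      rw [digD, dif_pos htm, digD, dif_pos htm] at h2
      have h3 : (C r).mulVec (phiD b m l) ⟨t, htm⟩ = (C r).mulVec (phiD b m j) ⟨t, htm⟩ :=
        ZMod.val_injective b h2
      show D.mulVec (phiD b m j - phiD b m l) ⟨r, t⟩ = 0
      rw [Matrix.mulVec_sub, Pi.sub_apply, sub_eq_zero]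
      exact h3.symm
    · intro h r
      rw [hgamma j r]
      intro t ht
      have htm : t < m := lt_of_lt_of_le ht (hk r)
      have h2 : D.mulVec (phiD b m j) ⟨r, ⟨t, ht⟩⟩ = D.mulVec (phiD b m l) ⟨r, ⟨t, ht⟩⟩ := by
        have h3 := congrFun h ⟨r, ⟨t, ht⟩⟩
        rw [Matrix.mulVec_sub] at h3
        simpa [sub_eq_zero] using h3
      rw [digD, dif_pos htm, digD, dif_pos htm]
      exact congrArg ZMod.val h2.symm
  -- rewrite the filter
  rw [mB]
  have hfilter : (Finset.univ.filter fun j : Fin (b^m) =>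
      j ≠ l ∧ ∀ r : Fin s, (k r : ℕ∞) ≤ gammaB b (digitalNet b m s C l r) (digitalNet b m s C j r))
      = Finset.univ.filter (fun j : Fin (b^m) =>
        (phiD b m j - phiD b m l ≠ 0 ∧ D.mulVec (phiD b m j - phiD b m l) = 0)) := by
    apply Finset.filter_congr
    intro j _
    rw [hcond j]
    constructor
    · rintro ⟨h1, h2⟩
      refine ⟨?_, h2⟩
      intro h0
      exact h1 (hφinj (sub_eq_zero.mp h0))
    · rintro ⟨h1, h2⟩
      refine ⟨?_, h2⟩
      intro h0
      exact h1 (by rw [h0, sub_self])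
  rw [hfilter]
  -- bijection with kernel minus zero
  have hψbij : Function.Bijective (fun j : Fin (b^m) => phiD b m j - phiD b m l) := by
    constructor
    · intro u v h
      apply hφinj
      have h2 := congrArg (· + phiD b m l) h
      simpa using h2
    · intro v
      obtain ⟨j, hj⟩ := hφbij.2 (v + phiD b m l)
      refine ⟨j, ?_⟩
      show phiD b m j - phiD b m l = v
      rw [hj]
      abel
  have hcount : (Finset.univ.filter (fun j : Fin (b^m) =>
        (phiD b m j - phiD b m l ≠ 0 ∧ D.mulVec (phiD b m j - phiD b m l) = 0))).card
      = (Finset.univ.filter (fun v : Fin m → ZMod b => v ≠ 0 ∧ D.mulVec v = 0)).card := by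
    rw [← Fintype.card_subtype, ← Fintype.card_subtype]
    exact Fintype.card_congr (Equiv.subtypeEquiv (Equiv.ofBijective _ hψbij) (fun j => Iff.rfl))
  rw [hcount]
  have herase : Finset.univ.filter (fun v : Fin m → ZMod b => v ≠ 0 ∧ D.mulVec v = 0)
      = (Finset.univ.filter (fun v : Fin m → ZMod b => D.mulVec v = 0)).erase 0 := by
    ext v
    simp [Finset.mem_erase, and_comm]
  rw [herase, Finset.card_erase_of_mem (by simp [Matrix.mulVec_zero]), (card_ker b D).1]
  rfl
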